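/- Let P be a 3×3 irreducible stochastic matrix whose eigenvalues are 1, λ, λ (a repeated eigenvalue). Then P is reversibly embeddable if and only if P is reversible and λ > 0. Moreover, in that case the reversible embedding is H = k_1(P − I) with k_1 = (log λ)/(λ − 1) > 0. -/

import Mathlib

open Matrix Polynomial

/-- `P` is a stochastic matrix: nonnegative entries, rows sum to 1. -/
def IsStochastic {n : ℕ} (P : Matrix (Fin n) (Fin n) ℝ) : Prop :=
  (∀ i j, 0 ≤ P i j) ∧ ∀ i, ∑ j, P i j = 1

/-- A stochastic matrix is irreducible if its directed graph is strongly connected. -/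
def IsIrreducibleStochastic {n : ℕ} (P : Matrix (Fin n) (Fin n) ℝ) : Prop :=
  ∀ i j : Fin n, Relation.ReflTransGen (fun a b => 0 < P a b) i j

/-- `Q` is a reversible generator matrix. -/
def IsReversibleGenerator {n : ℕ} (Q : Matrix (Fin n) (Fin n) ℝ) : Prop :=
  ((∀ i j, i ≠ j → 0 ≤ Q i j) ∧ ∀ i, ∑ j, Q i j = 0) ∧
  ∃ π : Fin n → ℝ, (∀ i, 0 ≤ π i) ∧ (∑ i, π i = 1) ∧
    ∀ i j, π i * Q i j = π j * Q j i

section Aux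

attribute [local instance] Matrix.linftyOpNormedRing Matrix.linftyOpNormedAlgebra

set_option maxHeartbeats 1000000

/-- Evaluation of the characteristic polynomial. -/
lemma aux_eval_cp (M : Matrix (Fin 3) (Fin 3) ℝ) (t : ℝ) :
    (M.charpoly).eval t = (t • (1 : Matrix (Fin 3) (Fin 3) ℝ) - M).det := by
  have h1 : (M.charpoly).eval t = ((charmatrix M).map (Polynomial.evalRingHom t)).det := by
    rw [Matrix.charpoly]; exact (RingHom.map_det (Polynomial.evalRingHom t) (charmatrix M))
  rw [h1]
  congr 1
  ext i j
  by_cases h : i = j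
  · subst h
    simp [Matrix.charmatrix_apply_eq, Matrix.one_apply]
  · simp [Matrix.charmatrix_apply_ne _ _ _ h, Matrix.one_apply, h]

/-- Exponential of a scaled idempotent matrix. -/
lemma aux_exp_idem (E : Matrix (Fin 3) (Fin 3) ℝ) (hE : E * E = E) (c : ℝ) :
    NormedSpace.exp (c • E) = 1 + (Real.exp c - 1) • E := by
  have hpow : ∀ n : ℕ, E ^ (n + 1) = E := by
    intro n; induction n with
    | zero => simp
    | succ n ih => rw [pow_succ, ih, hE]
  have hsE : Summable fun n : ℕ => ((n.factorial : ℝ))⁻¹ • (c • E) ^ n :=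
    NormedSpace.expSeries_summable' _
  have hsc : Summable fun n : ℕ => ((n.factorial : ℝ))⁻¹ • c ^ n :=
    NormedSpace.expSeries_summable' _
  have hsc' : Summable fun n : ℕ => (((n+1).factorial : ℝ))⁻¹ • c ^ (n+1) :=
    ((summable_nat_add_iff 1).2 hsc)
  have hexpc : Real.exp c = 1 + ∑' n : ℕ, (((n+1).factorial : ℝ))⁻¹ • c ^ (n+1) := by
    rw [Real.exp_eq_exp_ℝ]; simp only [NormedSpace.exp_eq_tsum ℝ]; rw [Summable.tsum_eq_zero_add hsc]
    simp
  simp only [NormedSpace.exp_eq_tsum ℝ]; rw [Summable.tsum_eq_zero_add hsE]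
  have h1 : ((Nat.factorial 0 : ℝ))⁻¹ • (c • E) ^ 0 = (1 : Matrix (Fin 3) (Fin 3) ℝ) := by simp
  have h2 : ∀ n : ℕ, (((n+1).factorial : ℝ))⁻¹ • (c • E) ^ (n+1)
      = ((((n+1).factorial : ℝ))⁻¹ • c ^ (n+1)) • E := by
    intro n
    rw [_root_.smul_pow, hpow, smul_smul, smul_eq_mul]
  rw [h1]
  congr 1
  calc (∑' n : ℕ, (((n+1).factorial : ℝ))⁻¹ • (c • E) ^ (n+1))
      = ∑' n : ℕ, ((((n+1).factorial : ℝ))⁻¹ • c ^ (n+1)) • E := by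
        exact tsum_congr h2
    _ = (∑' n : ℕ, (((n+1).factorial : ℝ))⁻¹ • c ^ (n+1)) • E := by
        rw [Summable.tsum_smul_const hsc' E]
    _ = (Real.exp c - 1) • E := by rw [hexpc]; congr 1; ring

/-- `exp A` fixes vectors annihilated by `A`. -/
lemma aux_exp_mulVec (A : Matrix (Fin 3) (Fin 3) ℝ) (v : Fin 3 → ℝ) (h : A *ᵥ v = 0) :
    NormedSpace.exp A *ᵥ v = v := by
  classical
  let L0 : Matrix (Fin 3) (Fin 3) ℝ →ₗ[ℝ] (Fin 3 → ℝ) :=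
    { toFun := fun M => M *ᵥ v
      map_add' := fun M N => Matrix.add_mulVec M N v
      map_smul' := fun c M => by simp [Matrix.smul_mulVec] }
  let L := LinearMap.toContinuousLinearMap L0
  have hs : Summable fun n : ℕ => ((n.factorial : ℝ))⁻¹ • A ^ n :=
    NormedSpace.expSeries_summable' _
  have hpow : ∀ n : ℕ, A ^ (n + 1) *ᵥ v = 0 := by
    intro n
    rw [pow_succ, ← Matrix.mulVec_mulVec, h, Matrix.mulVec_zero]
  have key : NormedSpace.exp A *ᵥ v = L (NormedSpace.exp A) := rfl
  rw [key]
  simp only [NormedSpace.exp_eq_tsum ℝ]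
  rw [L.map_tsum hs]
  have hterm : ∀ n : ℕ, L (((n.factorial : ℝ))⁻¹ • A ^ n) = if n = 0 then v else 0 := by
    intro n
    cases n with
    | zero => simp [L, L0]
    | succ n => simp [L, L0, hpow n]
  rw [tsum_congr hterm, tsum_eq_single 0]
  · simp
  · intro b hb; simp [hb]

/-- Uniqueness of the stationary distribution of an irreducible stochastic matrix. -/
lemma aux_stationary_unique {n : ℕ} [NeZero n] (P : Matrix (Fin n) (Fin n) ℝ)
    (μ π : Fin n → ℝ)
    (hP : IsStochastic P) (hPirr : IsIrreducibleStochastic P)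
    (hμpos : ∀ i, 0 < μ i) (hμsum : ∑ i, μ i = 1)
    (hμinv : ∀ j, ∑ i, μ i * P i j = μ j)
    (hπ1 : ∑ i, π i = 1)
    (hπinv : ∀ j, ∑ i, π i * P i j = π j) : π = μ := by
  obtain ⟨i₀, -, hmin⟩ := Finset.exists_min_image Finset.univ (fun i => π i / μ i)
    ⟨⟨0, Nat.pos_of_ne_zero (NeZero.ne n)⟩, Finset.mem_univ _⟩
  set c := π i₀ / μ i₀ with hc
  have hle : ∀ i, c * μ i ≤ π i := by
    intro i
    have h := hmin i (Finset.mem_univ i)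
    rw [div_le_div_iff₀ (hμpos i₀) (hμpos i)] at h
    rw [hc, div_mul_eq_mul_div, div_le_iff₀ (hμpos i₀)]
    linarith
  have hi₀ : π i₀ = c * μ i₀ := by
    rw [hc, div_mul_cancel₀ _ (hμpos i₀).ne']
  have hstep : ∀ i j, 0 < P i j → π j = c * μ j → π i = c * μ i := by
    intro i j hPij hj
    by_contra hne
    have hlt : c * μ i < π i := lt_of_le_of_ne (hle i) (fun h => hne h.symm)
    have hsum : ∑ k, c * μ k * P k j < ∑ k, π k * P k j := by
      apply Finset.sum_lt_sum
      · intro k _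
        exact mul_le_mul_of_nonneg_right (hle k) (hP.1 k j)
      · exact ⟨i, Finset.mem_univ i, mul_lt_mul_of_pos_right hlt hPij⟩
    have h1 : ∑ k, c * μ k * P k j = c * μ j := by
      calc ∑ k, c * μ k * P k j = c * ∑ k, μ k * P k j := by
            rw [Finset.mul_sum]; exact Finset.sum_congr rfl (fun k _ => by ring)
        _ = c * μ j := by rw [hμinv j]
    rw [h1, hπinv j, hj] at hsum
    exact lt_irrefl _ hsum
  have hall : ∀ i, π i = c * μ i := by
    intro i
    have hpath := hPirr i i₀
    induction hpath using Relation.ReflTransGen.head_induction_on with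
    | refl => exact hi₀
    | head hab _ ih => exact hstep _ _ hab ih
  have hc1 : c = 1 := by
    have h : ∑ i, π i = c * ∑ i, μ i := by
      rw [Finset.mul_sum]
      exact Finset.sum_congr rfl (fun i _ => hall i)
    rw [hπ1, hμsum, mul_one] at h
    exact h.symm
  funext i
  rw [hall i, hc1, one_mul]

/-- For a reversible matrix, the Cayley–Hamilton relation upgrades to a quadratic one. -/
lemma aux_reversible_quad (P : Matrix (Fin 3) (Fin 3) ℝ) (μ : Fin 3 → ℝ) (lam : ℝ)
    (hμpos : ∀ i, 0 < μ i)
    (hrev : ∀ i j, μ i * P i j = μ j * P j i)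
    (hCH : (P - 1) * ((P - lam • 1) * (P - lam • 1)) = 0) :
    (P - 1) * (P - lam • 1) = 0 := by
  classical
  have hsq : ∀ i, Real.sqrt (μ i) * Real.sqrt (μ i) = μ i :=
    fun i => Real.mul_self_sqrt (hμpos i).le
  have hne : ∀ i, Real.sqrt (μ i) ≠ 0 := fun i => (Real.sqrt_pos.2 (hμpos i)).ne'
  set C : Matrix (Fin 3) (Fin 3) ℝ := Matrix.diagonal (fun i => Real.sqrt (μ i)) with hC
  set Ci : Matrix (Fin 3) (Fin 3) ℝ := Matrix.diagonal (fun i => (Real.sqrt (μ i))⁻¹) with hCi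
  have hCC : C * Ci = 1 := by
    rw [hC, hCi, Matrix.diagonal_mul_diagonal]
    rw [show (fun i => Real.sqrt (μ i) * (Real.sqrt (μ i))⁻¹) = fun _ => (1:ℝ) from
      funext fun i => mul_inv_cancel₀ (hne i), Matrix.diagonal_one]
  have hCC' : Ci * C = 1 := by
    rw [hC, hCi, Matrix.diagonal_mul_diagonal]
    rw [show (fun i => (Real.sqrt (μ i))⁻¹ * Real.sqrt (μ i)) = fun _ => (1:ℝ) from
      funext fun i => inv_mul_cancel₀ (hne i), Matrix.diagonal_one]
  have hcanL : ∀ X : Matrix (Fin 3) (Fin 3) ℝ, Ci * (C * X) = X := fun X => by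
    rw [← Matrix.mul_assoc, hCC', Matrix.one_mul]
  have hmul : ∀ X Y : Matrix (Fin 3) (Fin 3) ℝ,
      (C * X * Ci) * (C * Y * Ci) = C * (X * Y) * Ci := by
    intro X Y
    rw [Matrix.mul_assoc (C * X) Ci (C * Y * Ci), Matrix.mul_assoc C Y Ci,
      hcanL (Y * Ci), ← Matrix.mul_assoc, Matrix.mul_assoc C X Y]
  have hinvconj : ∀ X : Matrix (Fin 3) (Fin 3) ℝ, Ci * (C * X * Ci) * C = X := by
    intro X
    rw [Matrix.mul_assoc C X Ci, hcanL (X * Ci), Matrix.mul_assoc X Ci C, hCC',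
      Matrix.mul_one]
  set S : Matrix (Fin 3) (Fin 3) ℝ := C * P * Ci with hS
  have hSapp : ∀ i j, S i j = Real.sqrt (μ i) * P i j * (Real.sqrt (μ j))⁻¹ := by
    intro i j
    rw [hS, hC, hCi, Matrix.mul_diagonal, Matrix.diagonal_mul]
  have hSsymm : Sᵀ = S := by
    ext i j
    rw [Matrix.transpose_apply, hSapp, hSapp]
    have key : Real.sqrt (μ j) * P j i * Real.sqrt (μ j)
        = Real.sqrt (μ i) * P i j * Real.sqrt (μ i) := by
      calc Real.sqrt (μ j) * P j i * Real.sqrt (μ j)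
          = Real.sqrt (μ j) * Real.sqrt (μ j) * P j i := by ring
        _ = μ j * P j i := by rw [hsq j]
        _ = μ i * P i j := hrev j i
        _ = Real.sqrt (μ i) * Real.sqrt (μ i) * P i j := by rw [hsq i]
        _ = Real.sqrt (μ i) * P i j * Real.sqrt (μ i) := by ring
    rw [← div_eq_mul_inv, ← div_eq_mul_inv,
      div_eq_div_iff (hne i) (hne j)]
    linear_combination key
  have hconj1 : C * (P - 1) * Ci = S - 1 := by
    rw [mul_sub, mul_one, sub_mul, hCC, hS]
  have hconj2 : C * (P - lam • 1) * Ci = S - lam • 1 := by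
    rw [mul_sub, Matrix.mul_smul, mul_one, sub_mul, Matrix.smul_mul, hCC, hS]
  have hA0 : (S - 1) * ((S - lam • 1) * (S - lam • 1)) = 0 := by
    rw [← hconj1, ← hconj2, hmul, hmul, hCH, Matrix.mul_zero, Matrix.zero_mul]
  set A : Matrix (Fin 3) (Fin 3) ℝ := (S - 1) * (S - lam • 1) with hA
  have hAt : Aᵀ = (S - lam • 1) * (S - 1) := by
    rw [hA, Matrix.transpose_mul, Matrix.transpose_sub, Matrix.transpose_sub,
      Matrix.transpose_one, Matrix.transpose_smul, Matrix.transpose_one, hSsymm]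
  have hAAt : A * Aᵀ = 0 := by
    rw [hAt, ← Matrix.mul_assoc, hA, Matrix.mul_assoc (S - 1) _ _, hA0, Matrix.zero_mul]
  have hAzero : A = 0 := by
    ext i j
    have htr : (A * Aᵀ) i i = ∑ k, A i k * A i k := by
      simp [Matrix.mul_apply, Matrix.transpose_apply]
    rw [hAAt] at htr
    have h0 : (0 : Matrix (Fin 3) (Fin 3) ℝ) i i = 0 := rfl
    rw [h0] at htr
    have := (Finset.sum_eq_zero_iff_of_nonneg
      (fun k _ => mul_self_nonneg (A i k))).1 htr.symm j (Finset.mem_univ j)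
    simpa [mul_self_eq_zero] using this
  have hCPC : C * ((P - 1) * (P - lam • 1)) * Ci = 0 := by
    rw [← hmul, hconj1, hconj2, ← hA, hAzero]
  have := congrArg (fun X => Ci * X * C) hCPC
  simpa [hinvconj ((P - 1) * (P - lam • 1))] using this

/-- An irreducible stochastic `3×3` matrix with char. poly. `(X-1)(X-λ)²` has `λ < 1`. -/
lemma aux_lam_lt_one (P : Matrix (Fin 3) (Fin 3) ℝ) (lam : ℝ)
    (hP : IsStochastic P) (hPirr : IsIrreducibleStochastic P)
    (hchar : P.charpoly = (X - C 1) * (X - C lam) ^ 2) : lam < 1 := by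
  have hpoly : (X - C 1) * (X - C lam) ^ 2
      = X ^ 3 - C (1 + (lam + lam)) * X ^ 2 + C (lam * lam + (lam + lam)) * X
        - C (lam * lam) := by
    simp only [_root_.map_add, _root_.map_mul, _root_.map_one]
    ring
  have hcoeff : ((X - C 1) * (X - C lam) ^ 2).coeff 2 = -(1 + (lam + lam)) := by
    rw [hpoly]
    simp [coeff_X_pow, coeff_C, coeff_X, Polynomial.coeff_C_mul, add_mul, one_mul]
  have htr : P.trace = 1 + 2 * lam := by
    have h := Matrix.trace_eq_neg_charpoly_coeff P
    rw [hchar] at h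
    have hcard : Fintype.card (Fin 3) - 1 = 2 := by simp
    rw [hcard, hcoeff] at h
    rw [h]; ring
  have hdiag_le : ∀ i, P i i ≤ 1 := by
    intro i
    rw [← hP.2 i]
    exact Finset.single_le_sum (fun j _ => hP.1 i j) (Finset.mem_univ i)
  have htr_def : P.trace = ∑ i, P i i := rfl
  have hle : lam ≤ 1 := by
    have : ∑ i, P i i ≤ ∑ _i : Fin 3, (1:ℝ) :=
      Finset.sum_le_sum (fun i _ => hdiag_le i)
    simp at this
    rw [← htr_def, htr] at this
    linarith
  rcases lt_or_eq_of_le hle with h | h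
  · exact h
  · exfalso
    have htr3 : ∑ i, P i i = 3 := by rw [← htr_def, htr, h]; norm_num
    have hdiag : ∀ i, P i i = 1 := by
      by_contra hcon
      push_neg at hcon
      obtain ⟨i, hi⟩ := hcon
      have hilt : P i i < 1 := lt_of_le_of_ne (hdiag_le i) hi
      have : ∑ i, P i i < ∑ _i : Fin 3, (1:ℝ) :=
        Finset.sum_lt_sum (fun k _ => hdiag_le k) ⟨i, Finset.mem_univ i, hilt⟩
      simp at this
      rw [htr3] at this
      linarith
    have hoff : ∀ a b : Fin 3, 0 < P a b → a = b := by
      intro a b hab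
      by_contra hnab
      have hpair : P a a + P a b = ∑ j ∈ ({a, b} : Finset (Fin 3)), P a j :=
        (Finset.sum_pair hnab).symm
      have hsub : ∑ j ∈ ({a, b} : Finset (Fin 3)), P a j ≤ ∑ j, P a j :=
        Finset.sum_le_sum_of_subset_of_nonneg (Finset.subset_univ _)
          (fun j _ _ => hP.1 a j)
      rw [hP.2 a, ← hpair, hdiag a] at hsub
      linarith
    have key : ∀ x y : Fin 3, Relation.ReflTransGen (fun a b => 0 < P a b) x y → x = y := by
      intro x y h
      induction h with
      | refl => rfl
      | tail _ hs ih => rw [ih]; exact hoff _ _ hs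
    exact absurd (key 0 1 (hPirr 0 1)) (by decide)

end Aux

set_option maxHeartbeats 1000000 in
theorem three_by_three_repeated_eigenvalue
    (P : Matrix (Fin 3) (Fin 3) ℝ) (μ : Fin 3 → ℝ) (lam : ℝ)
    (hP : IsStochastic P) (hPirr : IsIrreducibleStochastic P)
    (hμpos : ∀ i, 0 < μ i) (hμsum : ∑ i, μ i = 1)
    (hμinv : ∀ j, ∑ i, μ i * P i j = μ j)
    (hchar : P.charpoly = (X - C 1) * (X - C lam) ^ 2) :
    ((∃ Q : Matrix (Fin 3) (Fin 3) ℝ, IsReversibleGenerator Q ∧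
        NormedSpace.exp Q = P) ↔
      ((∀ i j, μ i * P i j = μ j * P j i) ∧ 0 < lam)) ∧
    ((∀ i j, μ i * P i j = μ j * P j i) → 0 < lam →
      0 < Real.log lam / (lam - 1) ∧
      IsReversibleGenerator ((Real.log lam / (lam - 1)) • (P - 1)) ∧
      NormedSpace.exp ((Real.log lam / (lam - 1)) • (P - 1)) = P) := by
  classical
  have hlam1 : lam < 1 := aux_lam_lt_one P lam hP hPirr hchar
  have hCH : (P - 1) * ((P - lam • 1) * (P - lam • 1)) = 0 := by
    have h := Matrix.aeval_self_charpoly P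
    rw [hchar] at h
    simp only [_root_.map_mul, _root_.map_sub, _root_.map_pow, aeval_X, aeval_C,
      _root_.map_one] at h
    rw [Algebra.algebraMap_eq_smul_one, pow_two] at h
    exact h
  set k := Real.log lam / (lam - 1) with hk_def
  have main : (∀ i j, μ i * P i j = μ j * P j i) → 0 < lam →
      0 < k ∧ IsReversibleGenerator (k • (P - 1)) ∧
      NormedSpace.exp (k • (P - 1)) = P := by
    intro hrev hlam0
    have hne : lam - 1 ≠ 0 := by intro h; rw [sub_eq_zero] at h; exact absurd h (ne_of_lt hlam1)
    have hk : 0 < k := div_pos_of_neg_of_neg (Real.log_neg hlam0 hlam1) (by linarith)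
    have hquad : (P - 1) * (P - lam • 1) = 0 :=
      aux_reversible_quad P μ lam hμpos hrev hCH
    have hN : (P - 1) * (P - 1) = (lam - 1) • (P - 1) := by
      have h : (P - 1) * (P - lam • 1)
          = (P - 1) * (P - 1) - (lam - 1) • (P - 1) := by
        rw [mul_sub, mul_sub, Matrix.mul_smul, mul_one, sub_smul, one_smul]
        abel
      rw [hquad] at h
      have h2 := h.symm
      rw [sub_eq_zero] at h2
      exact h2
    -- the idempotent
    set E : Matrix (Fin 3) (Fin 3) ℝ := (lam - 1)⁻¹ • (P - 1) with hE_def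
    have hEE : E * E = E := by
      rw [hE_def, Matrix.smul_mul, Matrix.mul_smul, hN, smul_smul, smul_smul]
      congr 1
      field_simp
    have hexpP : NormedSpace.exp (k • (P - 1)) = P := by
      have h1 : k • (P - 1) = Real.log lam • E := by
        rw [hE_def, smul_smul, hk_def, div_eq_mul_inv]
      rw [h1]
      have h2 := aux_exp_idem E hEE (Real.log lam)
      rw [show Real.log lam • E = Real.log lam • E from rfl] at h2
      rw [h2, Real.exp_log hlam0, hE_def, smul_smul, mul_inv_cancel₀ hne, one_smul]
      rw [add_sub_cancel]
    refine ⟨hk, ⟨⟨?_, ?_⟩, μ, fun i => (hμpos i).le, hμsum, ?_⟩, hexpP⟩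
    · intro i j hij
      have h1 : (k • (P - 1)) i j = k * (P i j - (1 : Matrix (Fin 3) (Fin 3) ℝ) i j) := rfl
      rw [h1, Matrix.one_apply_ne hij, sub_zero]
      exact mul_nonneg hk.le (hP.1 i j)
    · intro i
      have h1 : ∀ j, (k • (P - 1)) i j = k * (P i j - (1 : Matrix (Fin 3) (Fin 3) ℝ) i j) :=
        fun j => rfl
      simp only [h1]
      rw [← Finset.mul_sum, Finset.sum_sub_distrib, hP.2 i]
      have : ∑ j, (1 : Matrix (Fin 3) (Fin 3) ℝ) i j = 1 := by
        simp [Matrix.one_apply]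
      rw [this, sub_self, mul_zero]
    · intro i j
      have h1 : (k • (P - 1)) i j = k * (P i j - (1 : Matrix (Fin 3) (Fin 3) ℝ) i j) := rfl
      have h2 : (k • (P - 1)) j i = k * (P j i - (1 : Matrix (Fin 3) (Fin 3) ℝ) j i) := rfl
      rw [h1, h2]
      by_cases hij : i = j
      · subst hij; ring
      · rw [Matrix.one_apply_ne hij, Matrix.one_apply_ne (Ne.symm hij)]
        rw [sub_zero, sub_zero]
        calc μ i * (k * P i j) = k * (μ i * P i j) := by ring
          _ = k * (μ j * P j i) := by rw [hrev i j]
          _ = μ j * (k * P j i) := by ring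
  refine ⟨⟨?_, ?_⟩, fun hrev hlam0 => main hrev hlam0⟩
  · -- forward direction
    rintro ⟨Q, ⟨⟨hQoff, hQrow⟩, π, hπ0, hπ1, hπbal⟩, hexpQ⟩
    -- π is stationary for P
    have hQt : Qᵀ *ᵥ π = 0 := by
      funext j
      have : (Qᵀ *ᵥ π) j = ∑ i, Q i j * π i := by
        simp [Matrix.mulVec, dotProduct, Matrix.transpose_apply]
      rw [this]
      calc ∑ i, Q i j * π i = ∑ i, π j * Q j i := by
            refine Finset.sum_congr rfl (fun i _ => ?_)
            rw [mul_comm, hπbal i j]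
        _ = π j * ∑ i, Q j i := by rw [Finset.mul_sum]
        _ = 0 := by rw [hQrow j, mul_zero]
    have hPt : Pᵀ *ᵥ π = π := by
      rw [← hexpQ, ← Matrix.exp_transpose Q]
      exact aux_exp_mulVec Qᵀ π hQt
    have hπinv : ∀ j, ∑ i, π i * P i j = π j := by
      intro j
      have := congrFun hPt j
      simp only [Matrix.mulVec, dotProduct, Matrix.transpose_apply] at this
      rw [← this]
      exact Finset.sum_congr rfl (fun i _ => mul_comm _ _)
    have hπμ : π = μ :=
      aux_stationary_unique P μ π hP hPirr hμpos hμsum hμinv hπ1 hπinv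
    subst hπμ
    -- detailed balance for P
    set D : Matrix (Fin 3) (Fin 3) ℝ := Matrix.diagonal π with hD
    set Di : Matrix (Fin 3) (Fin 3) ℝ := Matrix.diagonal (fun i => (π i)⁻¹) with hDi
    have hDDi : D * Di = 1 := by
      rw [hD, hDi, Matrix.diagonal_mul_diagonal]
      rw [show (fun i => π i * (π i)⁻¹) = fun _ => (1:ℝ) from
        funext fun i => mul_inv_cancel₀ (hμpos i).ne', Matrix.diagonal_one]
    have hDiD : Di * D = 1 := by
      rw [hD, hDi, Matrix.diagonal_mul_diagonal]
      rw [show (fun i => (π i)⁻¹ * π i) = fun _ => (1:ℝ) from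
        funext fun i => inv_mul_cancel₀ (hμpos i).ne', Matrix.diagonal_one]
    set U : (Matrix (Fin 3) (Fin 3) ℝ)ˣ := ⟨D, Di, hDDi, hDiD⟩ with hU
    have hDQ : D * Q = Qᵀ * D := by
      ext i j
      rw [hD, Matrix.diagonal_mul, Matrix.mul_diagonal, Matrix.transpose_apply]
      rw [hπbal i j]; ring
    have hQt_conj : Qᵀ = D * Q * Di := by
      rw [hDQ, Matrix.mul_assoc, hDDi, Matrix.mul_one]
    have hPtDP : Pᵀ = D * P * Di := by
      rw [← hexpQ, ← Matrix.exp_transpose Q, hQt_conj]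
      have := Matrix.exp_units_conj U Q
      simpa [hU] using this
    have hrev : ∀ i j, π i * P i j = π j * P j i := by
      intro i j
      have h := congrArg (fun M => M * D) hPtDP
      simp only [Matrix.mul_assoc, hDiD, Matrix.mul_one] at h
      have h2 := congrFun (congrFun h i) j
      simp only [hD, Matrix.mul_diagonal, Matrix.diagonal_mul, Matrix.transpose_apply] at h2
      linear_combination -h2
    refine ⟨hrev, ?_⟩
    -- positivity of lam
    have hdet : ((lam • (1 : Matrix (Fin 3) (Fin 3) ℝ)) - P).det = 0 := by
      have h := aux_eval_cp P lam
      rw [hchar] at h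
      simp only [eval_mul, eval_pow, eval_sub, eval_X, eval_C] at h
      rw [← h]
      simp
    obtain ⟨v, hv0, hv⟩ := (Matrix.exists_mulVec_eq_zero_iff).2 hdet
    have hPv : P *ᵥ v = lam • v := by
      have h := hv
      rw [Matrix.sub_mulVec] at h
      have h2 : (lam • (1 : Matrix (Fin 3) (Fin 3) ℝ)) *ᵥ v = lam • v := by
        rw [Matrix.smul_mulVec, Matrix.one_mulVec]
      rw [h2, sub_eq_zero] at h
      exact h.symm
    set R : Matrix (Fin 3) (Fin 3) ℝ := NormedSpace.exp ((2⁻¹ : ℝ) • Q) with hR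
    have hRR : R * R = P := by
      rw [hR, ← Matrix.exp_add_of_commute _ _ (Commute.refl _)]
      rw [← add_smul]
      norm_num
      exact hexpQ
    have hDR : D * R = Rᵀ * D := by
      have hconj : ((2⁻¹ : ℝ) • Q)ᵀ = D * ((2⁻¹ : ℝ) • Q) * Di := by
        rw [Matrix.transpose_smul, hQt_conj, Matrix.mul_smul, Matrix.smul_mul]
      have h := congrArg (fun A => NormedSpace.exp A) hconj
      have h : NormedSpace.exp (((2⁻¹ : ℝ) • Q)ᵀ) = NormedSpace.exp (D * ((2⁻¹ : ℝ) • Q) * Di) := h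
      rw [Matrix.exp_transpose] at h
      have h2 := Matrix.exp_units_conj U ((2⁻¹ : ℝ) • Q)
      have h3 : Rᵀ = D * R * Di := by
        rw [hR, h]
        simpa [hU] using h2
      rw [h3, Matrix.mul_assoc, hDiD, Matrix.mul_one]
    set y : Fin 3 → ℝ := R *ᵥ v with hy_def
    have hy0 : y ≠ 0 := by
      intro hy
      apply hv0
      have hinv : NormedSpace.exp (-((2⁻¹ : ℝ) • Q)) * R = 1 := by
        rw [hR, ← Matrix.exp_add_of_commute (-((2⁻¹ : ℝ) • Q)) ((2⁻¹ : ℝ) • Q) (Commute.neg_left (Commute.refl _))]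
        rw [neg_add_cancel, NormedSpace.exp_zero]
      calc v = (1 : Matrix (Fin 3) (Fin 3) ℝ) *ᵥ v := (Matrix.one_mulVec v).symm
        _ = (NormedSpace.exp (-((2⁻¹ : ℝ) • Q)) * R) *ᵥ v := by rw [hinv]
        _ = NormedSpace.exp (-((2⁻¹ : ℝ) • Q)) *ᵥ (R *ᵥ v) := by
            rw [← Matrix.mulVec_mulVec]
        _ = NormedSpace.exp (-((2⁻¹ : ℝ) • Q)) *ᵥ y := rfl
        _ = NormedSpace.exp (-((2⁻¹ : ℝ) • Q)) *ᵥ 0 := by rw [hy]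
        _ = 0 := Matrix.mulVec_zero _
    -- quadratic form computation
    have hquadform : lam * (v ⬝ᵥ (D *ᵥ v)) = y ⬝ᵥ (D *ᵥ y) := by
      have h1 : v ⬝ᵥ (D *ᵥ (P *ᵥ v)) = lam * (v ⬝ᵥ (D *ᵥ v)) := by
        rw [hPv, Matrix.mulVec_smul, dotProduct_smul, smul_eq_mul]
      have h2 : v ⬝ᵥ (D *ᵥ (P *ᵥ v)) = y ⬝ᵥ (D *ᵥ y) := by
        rw [Matrix.mulVec_mulVec]
        have hDP : D * P = Rᵀ * (D * R) := by
          conv_lhs => rw [← hRR, ← Matrix.mul_assoc, hDR, Matrix.mul_assoc]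
        rw [hDP, ← Matrix.mulVec_mulVec, dotProduct_mulVec, Matrix.vecMul_transpose,
          Matrix.mulVec_mulVec, ← hy_def, ← Matrix.mulVec_mulVec]
      rw [← h1, h2]
    have hdotpos : ∀ w : Fin 3 → ℝ, w ≠ 0 → 0 < w ⬝ᵥ (D *ᵥ w) := by
      intro w hw
      have hform : w ⬝ᵥ (D *ᵥ w) = ∑ i, π i * (w i * w i) := by
        simp only [dotProduct, hD, Matrix.mulVec_diagonal]
        exact Finset.sum_congr rfl (fun i _ => by ring)
      rw [hform]
      obtain ⟨i, hi⟩ := Function.ne_iff.1 hw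
      refine Finset.sum_pos' (fun j _ => mul_nonneg (hμpos j).le (mul_self_nonneg _)) ?_
      exact ⟨i, Finset.mem_univ i, mul_pos (hμpos i) (mul_self_pos.2 hi)⟩
    have ha := hdotpos v hv0
    have hb := hdotpos y hy0
    nlinarith [hquadform]
  · rintro ⟨hrev, hlam0⟩
    obtain ⟨hk, hgen, hexp⟩ := main hrev hlam0
    exact ⟨k • (P - 1), hgen, hexp⟩
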